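/- The host is persistent in the host–parasite ecological model under either of the following conditions: if d > r₂, or if d < r₂ and r₁/a > K₂(1 − d/r₂), then every solution t ↦ (x₁(t), x₂(t)) on [0, ∞) with x₁(0) > 0 and x₂(0) ≥ 0 satisfies liminf_{t→∞} x₁(t) > 0. -/

import Mathlib

open Set Filter Topology

lemma lower_barrier {f f' : ℝ → ℝ} {c : ℝ}
    (hder : ∀ t, (0:ℝ) ≤ t → HasDerivAt f (f' t) t)
    (h0 : c ≤ f 0)
    (hb : ∀ t, (0:ℝ) ≤ t → f t ≤ c → 0 ≤ f' t) :
    ∀ t, (0:ℝ) ≤ t → c ≤ f t := by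
  intro t₀ ht₀
  by_contra hcon
  push_neg at hcon
  have hcont : ContinuousOn f (Icc 0 t₀) := fun u hu =>
    ((hder u hu.1).continuousAt).continuousWithinAt
  set S : Set ℝ := {u | u ∈ Icc (0:ℝ) t₀ ∧ c ≤ f u} with hS
  have hSne : S.Nonempty := ⟨0, ⟨le_refl 0, ht₀⟩, h0⟩
  have hSbdd : BddAbove S := ⟨t₀, fun u hu => hu.1.2⟩
  have hSclosed : IsClosed S := by
    have := hcont.preimage_isClosed_of_isClosed isClosed_Icc (isClosed_Ici (a := c))
    exact this
  set s := sSup S with hs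
  have hsS : s ∈ S := hSclosed.csSup_mem hSne hSbdd
  have hs0 : (0:ℝ) ≤ s := hsS.1.1
  have hst₀ : s ≤ t₀ := hsS.1.2
  have hsne : s ≠ t₀ := by
    intro hcontra
    rw [hcontra] at hsS
    exact absurd hsS.2 (not_le.2 hcon)
  have hslt : s < t₀ := lt_of_le_of_ne hst₀ hsne
  have hlt : ∀ u ∈ Ioc s t₀, f u < c := by
    intro u hu
    by_contra hge
    push_neg at hge
    have : u ∈ S := ⟨⟨hs0.trans hu.1.le, hu.2⟩, hge⟩
    exact absurd (le_csSup hSbdd this) (not_le.2 hu.1)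
  -- f s ≤ c by right continuity
  have hfs_le : f s ≤ c := by
    have hmem : s ∈ closure (Ioc s t₀) := by
      rw [closure_Ioc hslt.ne]
      exact ⟨le_refl s, hslt.le⟩
    have hnb : (𝓝[Ioc s t₀] s).NeBot := mem_closure_iff_nhdsWithin_neBot.1 hmem
    have htend : Tendsto f (𝓝[Ioc s t₀] s) (𝓝 (f s)) :=
      ((hder s hs0).continuousAt).continuousWithinAt
    exact le_of_tendsto htend (eventually_mem_nhdsWithin.mono fun u hu => (hlt u hu).le)
  have hfs : f s = c := le_antisymm hfs_le hsS.2
  -- f ≤ c on Icc s t₀, so f' ≥ 0 there, so monotone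
  have hmono : MonotoneOn f (Icc s t₀) := by
    apply monotoneOn_of_deriv_nonneg (convex_Icc s t₀)
      (hcont.mono (Icc_subset_Icc_left hs0))
    · intro u hu
      rw [interior_Icc] at hu
      exact ((hder u (hs0.trans hu.1.le)).differentiableAt).differentiableWithinAt
    · intro u hu
      rw [interior_Icc] at hu
      have hu0 : (0:ℝ) ≤ u := hs0.trans hu.1.le
      rw [(hder u hu0).deriv]
      exact hb u hu0 (hlt u ⟨hu.1, hu.2.le⟩).le
  have := hmono (left_mem_Icc.2 hslt.le) (right_mem_Icc.2 hslt.le) hslt.le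
  rw [hfs] at this
  exact absurd (this.trans_lt hcon) (lt_irrefl c)

lemma upper_barrier {f f' : ℝ → ℝ} {c : ℝ}
    (hder : ∀ t, (0:ℝ) ≤ t → HasDerivAt f (f' t) t)
    (h0 : f 0 ≤ c)
    (hb : ∀ t, (0:ℝ) ≤ t → c ≤ f t → f' t ≤ 0) :
    ∀ t, (0:ℝ) ≤ t → f t ≤ c := by
  intro t ht
  have := lower_barrier (f := fun u => -f u) (f' := fun u => -f' u) (c := -c)
    (fun u hu => (hder u hu).neg) (by simpa using h0)
    (fun u hu hle => by
      have : c ≤ f u := by simpa using neg_le_neg hle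
      simpa using hb u hu this) t ht
  simpa using this

lemma pos_forward {f g : ℝ → ℝ}
    (hder : ∀ t, (0:ℝ) ≤ t → HasDerivAt f (f t * g t) t)
    (hg : ∀ T, (0:ℝ) ≤ T → (∀ u ∈ Icc (0:ℝ) T, 0 ≤ f u) →
      ∃ C, 0 ≤ C ∧ ∀ u ∈ Icc (0:ℝ) T, |g u| ≤ C)
    (h0 : 0 < f 0) : ∀ t, (0:ℝ) ≤ t → 0 < f t := by
  intro t₀ ht₀
  by_contra hcon
  push_neg at hcon
  have hcont : ContinuousOn f (Icc 0 t₀) := fun u hu =>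
    ((hder u hu.1).continuousAt).continuousWithinAt
  set S : Set ℝ := {u | u ∈ Icc (0:ℝ) t₀ ∧ f u ≤ 0} with hSdef
  have hSne : S.Nonempty := ⟨t₀, ⟨⟨ht₀, le_refl t₀⟩, hcon⟩⟩
  have hSbdd : BddBelow S := ⟨0, fun u hu => hu.1.1⟩
  have hSclosed : IsClosed S := by
    have := hcont.preimage_isClosed_of_isClosed isClosed_Icc (isClosed_Iic (a := (0:ℝ)))
    exact this
  set s := sInf S with hs
  have hsS : s ∈ S := hSclosed.csInf_mem hSne hSbdd
  have hs0 : (0:ℝ) ≤ s := hsS.1.1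
  have hst₀ : s ≤ t₀ := hsS.1.2
  have hpos : ∀ u, 0 ≤ u → u < s → 0 < f u := by
    intro u hu hus
    by_contra hle
    push_neg at hle
    have : u ∈ S := ⟨⟨hu, hus.le.trans hst₀⟩, hle⟩
    exact absurd (csInf_le hSbdd this) (not_le.2 hus)
  have hspos : 0 < s := by
    rcases eq_or_lt_of_le hs0 with hEq | h
    · exfalso; rw [← hEq] at hsS; exact absurd h0 (not_lt.2 hsS.2)
    · exact h
  have hfs_ge : 0 ≤ f s := by
    have hmem : s ∈ closure (Ico 0 s) := by
      rw [closure_Ico hspos.ne]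
      exact ⟨hs0, le_refl _⟩
    have hnb : (𝓝[Ico 0 s] s).NeBot := mem_closure_iff_nhdsWithin_neBot.1 hmem
    have htend : Tendsto f (𝓝[Ico 0 s] s) (𝓝 (f s)) :=
      ((hder s hs0).continuousAt).continuousWithinAt
    exact ge_of_tendsto htend (eventually_mem_nhdsWithin.mono fun u hu => (hpos u hu.1 hu.2).le)
  have hfs : f s = 0 := le_antisymm hsS.2 hfs_ge
  have hnonneg : ∀ u ∈ Icc (0:ℝ) s, 0 ≤ f u := by
    intro u hu
    rcases eq_or_lt_of_le hu.2 with hEq | h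
    · rw [hEq, hfs]
    · exact (hpos u hu.1 h).le
  obtain ⟨C, hC0, hC⟩ := hg s hs0 hnonneg
  set y : ℝ → ℝ := fun u => f (s - u) with hy
  have hyder : ∀ u ∈ Ico (0:ℝ) s, HasDerivWithinAt y (-(f (s-u) * g (s-u))) (Ici u) u := by
    intro u hu
    have h1 : HasDerivAt (fun v : ℝ => s - v) (-1) u := by
      simpa using (hasDerivAt_id u).const_sub s
    have hsu : (0:ℝ) ≤ s - u := by linarith [hu.2]
    have h2 := (hder (s-u) hsu).comp u h1
    have h3 : HasDerivAt y (-(f (s-u) * g (s-u))) u := by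
      exact h2.congr_deriv (by ring)
    exact h3.hasDerivWithinAt
  have hycont : ContinuousOn y (Icc 0 s) := by
    apply ContinuousOn.comp hcont
    · exact (continuous_const.sub continuous_id).continuousOn
    · intro u hu
      exact ⟨by simpa using hu.2, by simp; linarith [hu.1, hst₀]⟩
  have hbound : ∀ u ∈ Ico (0:ℝ) s, ‖-(f (s-u) * g (s-u))‖ ≤ C * ‖y u‖ + 0 := by
    intro u hu
    have hsu : s - u ∈ Icc (0:ℝ) s := ⟨by linarith [hu.2], by linarith [hu.1]⟩
    rw [norm_neg, norm_mul, add_zero]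
    calc ‖f (s-u)‖ * ‖g (s-u)‖ ≤ ‖f (s-u)‖ * C :=
          mul_le_mul_of_nonneg_left (hC _ hsu) (norm_nonneg _)
      _ = C * ‖y u‖ := by rw [mul_comm]
  have hgr := norm_le_gronwallBound_of_norm_deriv_right_le (δ := 0) (K := C) (ε := 0)
    hycont hyder (show ‖y 0‖ ≤ 0 by simp [y, hfs]) hbound s ⟨hspos.le, le_refl _⟩
  rw [gronwallBound_ε0_δ0] at hgr
  have : y s = f 0 := by simp [y]
  rw [this] at hgr
  have : |f 0| ≤ 0 := hgr
  exact absurd h0 (not_lt.2 (by rw [abs_le] at this; exact this.2))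

lemma nonneg_forward {f g : ℝ → ℝ}
    (hder : ∀ t, (0:ℝ) ≤ t → HasDerivAt f (f t * g t) t)
    (hg : ∀ T, (0:ℝ) ≤ T → ∃ C, 0 ≤ C ∧ ∀ u ∈ Icc (0:ℝ) T, |g u| ≤ C)
    (h0 : 0 ≤ f 0) : ∀ t, (0:ℝ) ≤ t → 0 ≤ f t := by
  intro t₀ ht₀
  by_contra hcon
  push_neg at hcon
  have hcont : ContinuousOn f (Icc 0 t₀) := fun u hu =>
    ((hder u hu.1).continuousAt).continuousWithinAt
  set S : Set ℝ := {u | u ∈ Icc (0:ℝ) t₀ ∧ 0 ≤ f u} with hSdef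
  have hSne : S.Nonempty := ⟨0, ⟨le_refl _, ht₀⟩, h0⟩
  have hSbdd : BddAbove S := ⟨t₀, fun u hu => hu.1.2⟩
  have hSclosed : IsClosed S := by
    have := hcont.preimage_isClosed_of_isClosed isClosed_Icc (isClosed_Ici (a := (0:ℝ)))
    exact this
  set s := sSup S with hs
  have hsS : s ∈ S := hSclosed.csSup_mem hSne hSbdd
  have hs0 : (0:ℝ) ≤ s := hsS.1.1
  have hst₀ : s ≤ t₀ := hsS.1.2
  have hslt : s < t₀ := by
    rcases eq_or_lt_of_le hst₀ with hEq | h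
    · exfalso; rw [hEq] at hsS; exact absurd hsS.2 (not_le.2 hcon)
    · exact h
  have hneg : ∀ u ∈ Ioc s t₀, f u < 0 := by
    intro u hu
    by_contra hge
    push_neg at hge
    have : u ∈ S := ⟨⟨hs0.trans hu.1.le, hu.2⟩, hge⟩
    exact absurd (le_csSup hSbdd this) (not_le.2 hu.1)
  have hfs_le : f s ≤ 0 := by
    have hmem : s ∈ closure (Ioc s t₀) := by
      rw [closure_Ioc hslt.ne]
      exact ⟨le_refl _, hslt.le⟩
    have hnb : (𝓝[Ioc s t₀] s).NeBot := mem_closure_iff_nhdsWithin_neBot.1 hmem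
    have htend : Tendsto f (𝓝[Ioc s t₀] s) (𝓝 (f s)) :=
      ((hder s hs0).continuousAt).continuousWithinAt
    exact le_of_tendsto htend (eventually_mem_nhdsWithin.mono fun u hu => (hneg u hu).le)
  have hfs : f s = 0 := le_antisymm hfs_le hsS.2
  obtain ⟨C, hC0, hC⟩ := hg t₀ ht₀
  have hfder : ∀ u ∈ Ico s t₀, HasDerivWithinAt f (f u * g u) (Ici u) u := fun u hu =>
    (hder u (hs0.trans hu.1)).hasDerivWithinAt
  have hbound : ∀ u ∈ Ico s t₀, ‖f u * g u‖ ≤ C * ‖f u‖ + 0 := by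
    intro u hu
    have hu' : u ∈ Icc (0:ℝ) t₀ := ⟨hs0.trans hu.1, hu.2.le⟩
    rw [norm_mul, add_zero]
    calc ‖f u‖ * ‖g u‖ ≤ ‖f u‖ * C := mul_le_mul_of_nonneg_left (hC _ hu') (norm_nonneg _)
      _ = C * ‖f u‖ := mul_comm _ _
  have hgr := norm_le_gronwallBound_of_norm_deriv_right_le (δ := 0) (K := C) (ε := 0)
    (hcont.mono (Icc_subset_Icc_left hs0)) hfder (show ‖f s‖ ≤ 0 by simp [hfs]) hbound
    t₀ ⟨hslt.le, le_refl _⟩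
  rw [gronwallBound_ε0_δ0] at hgr
  have : |f t₀| ≤ 0 := hgr
  rw [abs_le] at this
  linarith [this.1, hcon]

noncomputable def hpg1 (r₁ K₁ a h : ℝ) (x₁ x₂ : ℝ → ℝ) (t : ℝ) : ℝ :=
  r₁ * (1 - x₁ t / K₁) - a * x₂ t / (1 + h * a * x₁ t)

noncomputable def hpg2 (r₂ K₂ a h e d : ℝ) (x₁ x₂ : ℝ → ℝ) (t : ℝ) : ℝ :=
  e * a * x₁ t / (1 + h * a * x₁ t) - d + r₂ * (1 - x₂ t / K₂)

set_option maxHeartbeats 2000000 in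
/-- persistence of the host. If d > r₂, or if d < r₂ and
r₁/a > K₂(1 − d/r₂), then every solution with x₁(0) > 0 and x₂(0) ≥ 0 satisfies
liminf_{t→∞} x₁(t) > 0. -/
theorem host_persistence
    (r₁ r₂ K₁ K₂ a h e d : ℝ)
    (hr₁ : 0 < r₁) (hr₂ : 0 < r₂) (hK₁ : 0 < K₁) (hK₂ : 0 < K₂)
    (ha : 0 < a) (hh : 0 < h) (he : 0 < e) (hd : 0 ≤ d)
    (hcond : d > r₂ ∨ (d < r₂ ∧ r₁ / a > K₂ * (1 - d / r₂)))
    (x₁ x₂ : ℝ → ℝ)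
    (hx₁ : ∀ t : ℝ, 0 ≤ t →
      HasDerivAt x₁ (x₁ t * (r₁ * (1 - x₁ t / K₁) - a * x₂ t / (1 + h * a * x₁ t))) t)
    (hx₂ : ∀ t : ℝ, 0 ≤ t →
      HasDerivAt x₂ (x₂ t * (e * a * x₁ t / (1 + h * a * x₁ t) - d + r₂ * (1 - x₂ t / K₂))) t)
    (hx₁0 : 0 < x₁ 0) (hx₂0 : 0 ≤ x₂ 0) :
    0 < Filter.liminf x₁ Filter.atTop := by
  have hx₁' : ∀ t, (0:ℝ) ≤ t → HasDerivAt x₁ (x₁ t * hpg1 r₁ K₁ a h x₁ x₂ t) t := hx₁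
  have hx₂' : ∀ t, (0:ℝ) ≤ t → HasDerivAt x₂ (x₂ t * hpg2 r₂ K₂ a h e d x₁ x₂ t) t := hx₂
  have hcx₁ : ∀ T : ℝ, ContinuousOn x₁ (Icc 0 T) := fun T u hu =>
    ((hx₁ u hu.1).continuousAt).continuousWithinAt
  have hcx₂ : ∀ T : ℝ, ContinuousOn x₂ (Icc 0 T) := fun T u hu =>
    ((hx₂ u hu.1).continuousAt).continuousWithinAt
  -- Step 1: positivity of x₁
  have hpos₁ : ∀ t, (0:ℝ) ≤ t → 0 < x₁ t := by
    apply pos_forward hx₁' _ hx₁0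
    intro T hT hfpos
    have hden : ContinuousOn (fun u => 1 + h * a * x₁ u) (Icc 0 T) :=
      continuousOn_const.add (continuousOn_const.mul (hcx₁ T))
    have hg1c : ContinuousOn (hpg1 r₁ K₁ a h x₁ x₂) (Icc 0 T) := by
      apply ContinuousOn.sub
      · exact continuousOn_const.mul (continuousOn_const.sub ((hcx₁ T).div_const _))
      · exact (continuousOn_const.mul (hcx₂ T)).div hden
          (fun u hu => by have := hfpos u hu; have h9 := mul_nonneg (mul_nonneg hh.le ha.le) this; intro heq; linarith [heq.ge, heq.le])
    obtain ⟨C, hC⟩ := (isCompact_Icc).exists_bound_of_continuousOn hg1c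
    exact ⟨max C 0, le_max_right _ _, fun u hu => by
      rw [← Real.norm_eq_abs]; exact (hC u hu).trans (le_max_left _ _)⟩
  -- Step 2: nonnegativity of x₂
  have hnn₂ : ∀ t, (0:ℝ) ≤ t → 0 ≤ x₂ t := by
    apply nonneg_forward hx₂' _ hx₂0
    intro T hT
    have hden : ContinuousOn (fun u => 1 + h * a * x₁ u) (Icc 0 T) :=
      continuousOn_const.add (continuousOn_const.mul (hcx₁ T))
    have hdnz : ∀ u ∈ Icc (0:ℝ) T, (1 + h * a * x₁ u) ≠ 0 := fun u hu => by
      have := hpos₁ u hu.1; have h9 := mul_pos (mul_pos hh ha) this; intro heq; linarith [heq.ge, heq.le]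
    have hg2c : ContinuousOn (hpg2 r₂ K₂ a h e d x₁ x₂) (Icc 0 T) := by
      apply ContinuousOn.add
      · exact ((continuousOn_const.mul (hcx₁ T)).div hden hdnz).sub continuousOn_const
      · exact continuousOn_const.mul (continuousOn_const.sub ((hcx₂ T).div_const _))
    obtain ⟨C, hC⟩ := (isCompact_Icc).exists_bound_of_continuousOn hg2c
    exact ⟨max C 0, le_max_right _ _, fun u hu => by
      rw [← Real.norm_eq_abs]; exact (hC u hu).trans (le_max_left _ _)⟩
  -- Step 3: upper bound on x₁
  set X : ℝ := max (x₁ 0) K₁ with hXdef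
  have hXK : K₁ ≤ X := by rw [hXdef]; exact le_max_right _ _
  have hXpos : 0 < X := lt_of_lt_of_le hK₁ hXK
  have hX : ∀ t, (0:ℝ) ≤ t → x₁ t ≤ X := by
    apply upper_barrier hx₁' (by rw [hXdef]; exact le_max_left _ _)
    intro t ht hXle
    have hu : 0 < x₁ t := hpos₁ t ht
    have hv : 0 ≤ x₂ t := hnn₂ t ht
    have hdenpos : 0 < 1 + h * a * x₁ t := by linarith [mul_pos (mul_pos hh ha) hu]
    have hg1le : hpg1 r₁ K₁ a h x₁ x₂ t ≤ 0 := by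
      unfold hpg1
      have h1 : r₁ * (1 - x₁ t / K₁) ≤ 0 := by
        have h1a : (1:ℝ) ≤ x₁ t / K₁ := (one_le_div hK₁).2 (hXK.trans hXle)
        exact mul_nonpos_of_nonneg_of_nonpos hr₁.le (by linarith)
      have h2 : 0 ≤ a * x₂ t / (1 + h * a * x₁ t) := by positivity
      linarith
    exact mul_nonpos_of_nonneg_of_nonpos hu.le hg1le
  -- Step 4: choose rational exponent
  have hQex : ∃ Q : ℚ, a * K₂ / r₂ < (Q:ℝ) ∧ (Q:ℝ) * (r₂ - d) < r₁ := by
    rcases hcond with hgt | ⟨hlt, hineq⟩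
    · obtain ⟨Q, h1, h2⟩ := exists_rat_btwn (show a * K₂ / r₂ < a * K₂ / r₂ + 1 by linarith)
      refine ⟨Q, h1, ?_⟩
      have hQpos : (0:ℝ) < Q := lt_trans (by positivity) h1
      have h9 : (Q:ℝ) * (r₂ - d) < 0 := mul_neg_of_pos_of_neg hQpos (by linarith)
      linarith
    · have hγ : 0 < r₂ - d := by linarith
      have hkey : a * K₂ / r₂ < r₁ / (r₂ - d) := by
        rw [div_lt_div_iff₀ hr₂ hγ]
        have h2 : K₂ * (1 - d / r₂) * a < r₁ := by
          rw [gt_iff_lt, lt_div_iff₀ ha] at hineq; exact hineq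
        have h3 : K₂ * (1 - d / r₂) * a * r₂ = a * K₂ * (r₂ - d) := by
          field_simp
        have h4 := mul_lt_mul_of_pos_right h2 hr₂
        linarith
      obtain ⟨Q, h1, h2⟩ := exists_rat_btwn hkey
      refine ⟨Q, h1, ?_⟩
      rw [lt_div_iff₀ hγ] at h2; linarith
  obtain ⟨Q, hQ1, hQ2⟩ := hQex
  set QR : ℝ := (Q:ℝ) with hQRdef
  have hQpos : 0 < QR := lt_trans (by positivity) hQ1
  have hQRat : 0 < Q := by
    have h0 : (0:ℝ) < (Q:ℝ) := by rw [← hQRdef]; exact hQpos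
    exact_mod_cast h0
  have hQnum0 : 0 ≤ Q.num := (Rat.num_pos.2 hQRat).le
  obtain ⟨m₀, hm₀⟩ : ∃ k : ℕ, Q.num.toNat = k + 1 :=
    ⟨Q.num.toNat - 1, (Nat.succ_pred_eq_of_pos (by
      have : 0 < Q.num := Rat.num_pos.2 hQRat
      omega)).symm⟩
  obtain ⟨n₀, hn₀⟩ : ∃ k : ℕ, Q.den = k + 1 :=
    ⟨Q.den - 1, (Nat.succ_pred_eq_of_pos Q.pos).symm⟩
  set m : ℕ := m₀ + 1 with hmdef
  set n : ℕ := n₀ + 1 with hndef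
  set M : ℝ := (m : ℝ) with hMdef
  set N : ℝ := (n : ℝ) with hNdef
  have hM1 : (1:ℝ) ≤ M := by rw [hMdef, hmdef]; exact_mod_cast Nat.one_le_iff_ne_zero.2 (by omega)
  have hN1 : (1:ℝ) ≤ N := by rw [hNdef, hndef]; exact_mod_cast Nat.one_le_iff_ne_zero.2 (by omega)
  have hMpos : 0 < M := lt_of_lt_of_le one_pos hM1
  have hNpos : 0 < N := lt_of_lt_of_le one_pos hN1
  have hnum : ((Q.num : ℝ)) = M := by
    rw [hMdef, ← hm₀]
    exact_mod_cast congrArg (Int.cast : ℤ → ℝ) (Int.toNat_of_nonneg hQnum0).symm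
  have hden : ((Q.den : ℕ) : ℝ) = N := by rw [hNdef, ← hn₀]
  have hMN : M = QR * N := by
    have hcast : QR = M / N := by rw [hQRdef, Rat.cast_def, hnum, hden]
    rw [hcast]
    field_simp
  -- Step 5: constants
  set bINF : ℝ := r₁ - QR * (r₂ - d) with hbdef
  have hbINF : 0 < bINF := by rw [hbdef]; linarith
  set D : ℝ := r₁ / K₁ + QR * e * a with hDdef
  have hD : 0 < D := by rw [hDdef]; positivity
  set δ : ℝ := min (K₁ / 2) (bINF / (4 * D)) with hδdef
  have hδ : 0 < δ := lt_min (by positivity) (by positivity)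
  have hδK : δ ≤ K₁ / 2 := min_le_left _ _
  have hδD : r₁ / K₁ * δ + QR * e * a * δ ≤ bINF / 4 := by
    have h1 : δ ≤ bINF / (4 * D) := min_le_right _ _
    rw [le_div_iff₀ (by positivity)] at h1
    rw [hDdef] at h1
    linarith
  set θ : ℝ := bINF / (4 * a) with hθdef
  have hθ : 0 < θ := by positivity
  have haθ : a * θ = bINF / 4 := by rw [hθdef]; field_simp
  set R : ℝ := r₁ * (1 - δ / K₁) with hRdef
  have hR : r₁ / 2 ≤ R := by
    rw [hRdef]
    have hhalf : δ / K₁ ≤ 1 / 2 := by rw [div_le_div_iff₀ hK₁ two_pos]; linarith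
    have h2 : (1:ℝ) / 2 ≤ 1 - δ / K₁ := by linarith
    calc r₁ / 2 = r₁ * (1 / 2) := by ring
      _ ≤ r₁ * (1 - δ / K₁) := mul_le_mul_of_nonneg_left h2 hr₁.le
  have hRpos : 0 < R := lt_of_lt_of_le (by positivity) hR
  set A' : ℝ := QR * r₂ / K₂ - a with hA'def
  have hA : 0 < A' := by
    rw [div_lt_iff₀ hr₂] at hQ1
    rw [hA'def, sub_pos, lt_div_iff₀ hK₂]
    linarith
  set G : ℝ := r₁ * X / K₁ with hGdef
  have hG : 0 < G := by rw [hGdef]; positivity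
  set γ₂ : ℝ := e / h + r₂ with hγ₂def
  have hγ₂ : 0 < γ₂ := by rw [hγ₂def]; positivity
  set B₁ : ℝ := G + a * θ + QR * γ₂ with hB₁def
  have hB₁ : 0 < B₁ := by rw [hB₁def]; positivity
  set Z : ℝ := (B₁ + G * θ + 1) / A' + 1 with hZdef
  have hZ1 : 1 ≤ Z := by
    rw [hZdef]
    have hnumz : (0:ℝ) ≤ B₁ + G * θ + 1 := by positivity
    have := div_nonneg hnumz hA.le
    linarith
  have hZkey : A' * Z = B₁ + G * θ + 1 + A' := by
    have hA0 : A' ≠ 0 := ne_of_gt hA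
    rw [hZdef]
    field_simp
  have hθZ : 0 < θ + Z := by linarith
  set c : ℝ := δ ^ n / (θ + Z) ^ m with hcdef
  have hc : 0 < c := by rw [hcdef]; positivity
  set W : ℝ → ℝ := fun t => x₁ t ^ n / (θ + x₂ t) ^ m with hWdef
  have hW0pos : 0 < W 0 := by
    rw [hWdef]
    have hp0 : 0 < θ + x₂ 0 := by linarith
    positivity
  set c₀ : ℝ := min c (W 0) with hc₀def
  have hc₀ : 0 < c₀ := by rw [hc₀def]; exact lt_min hc hW0pos
  have hc₀c : c₀ ≤ c := by rw [hc₀def]; exact min_le_left _ _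
  -- Step 6: derivative of W
  set Wd : ℝ → ℝ := fun t =>
    ((n:ℝ) * x₁ t ^ (n - 1) * (x₁ t * hpg1 r₁ K₁ a h x₁ x₂ t) * (θ + x₂ t) ^ m -
      x₁ t ^ n * ((m:ℝ) * (θ + x₂ t) ^ (m - 1) * (x₂ t * hpg2 r₂ K₂ a h e d x₁ x₂ t))) /
      ((θ + x₂ t) ^ m) ^ 2 with hWddef
  have hWder : ∀ t, (0:ℝ) ≤ t → HasDerivAt W (Wd t) t := by
    intro t ht
    have hp : 0 < θ + x₂ t := by have := hnn₂ t ht; linarith only [hθ, this]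
    have h1 : HasDerivAt (fun u => x₁ u ^ n)
        ((n:ℝ) * x₁ t ^ (n - 1) * (x₁ t * hpg1 r₁ K₁ a h x₁ x₂ t)) t := (hx₁' t ht).pow n
    have h2 : HasDerivAt (fun u => (θ + x₂ u) ^ m)
        ((m:ℝ) * (θ + x₂ t) ^ (m - 1) * (x₂ t * hpg2 r₂ K₂ a h e d x₁ x₂ t)) t :=
      ((hx₂' t ht).const_add θ).pow m
    rw [hWdef, hWddef]
    exact h1.div h2 (ne_of_gt (pow_pos hp m))
  -- Step 7: key inequality
  have hkey : ∀ t, (0:ℝ) ≤ t → W t ≤ c₀ → 0 ≤ Wd t := by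
    intro t ht hWle
    have hu : 0 < x₁ t := hpos₁ t ht
    have hv : 0 ≤ x₂ t := hnn₂ t ht
    have huX : x₁ t ≤ X := hX t ht
    have hp : 0 < θ + x₂ t := by linarith only [hθ, hv]
    have hdenpos : 0 < 1 + h * a * x₁ t := by
      linarith only [mul_pos (mul_pos hh ha) hu]
    have hE : 0 ≤ N * hpg1 r₁ K₁ a h x₁ x₂ t * (θ + x₂ t) -
        M * x₂ t * hpg2 r₂ K₂ a h e d x₁ x₂ t := by
      by_cases huδ : x₁ t ≤ δ
      · -- small x₁ region
        have hg₁lb : R - a * x₂ t ≤ hpg1 r₁ K₁ a h x₁ x₂ t := by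
          unfold hpg1
          have hdiv : x₁ t / K₁ ≤ δ / K₁ := by gcongr
          have h1 : R ≤ r₁ * (1 - x₁ t / K₁) := by
            rw [hRdef]
            exact mul_le_mul_of_nonneg_left (by linarith only [hdiv]) hr₁.le
          have h2 : a * x₂ t / (1 + h * a * x₁ t) ≤ a * x₂ t := by
            apply div_le_self (by positivity)
            linarith only [mul_nonneg (mul_nonneg hh.le ha.le) hu.le]
          linarith only [h1, h2]
        have hg₂ub : hpg2 r₂ K₂ a h e d x₁ x₂ t ≤ e * a * δ + (r₂ - d) - r₂ * x₂ t / K₂ := by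
          unfold hpg2
          have h1a : e * a * x₁ t / (1 + h * a * x₁ t) ≤ e * a * x₁ t := by
            apply div_le_self (by positivity)
            linarith only [mul_nonneg (mul_nonneg hh.le ha.le) hu.le]
          have h1b : e * a * x₁ t ≤ e * a * δ :=
            mul_le_mul_of_nonneg_left huδ (mul_nonneg he.le ha.le)
          have h2 : r₂ * (1 - x₂ t / K₂) = r₂ - r₂ * x₂ t / K₂ := by ring
          linarith only [h1a, h1b, h2]
        have hinner : 0 ≤ R - a * θ - QR * (e * a * δ + (r₂ - d)) := by
          have hRe : R = r₁ - r₁ / K₁ * δ := by rw [hRdef]; field_simp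
          have hqe : QR * (e * a * δ + (r₂ - d)) = QR * e * a * δ + QR * (r₂ - d) := by
            ring
          linarith only [hRe, hδD, haθ, hbINF, hbdef, hqe]
        have hmid : 0 ≤ N * R - N * (a * θ) - M * (e * a * δ + (r₂ - d)) := by
          rw [hMN]
          linarith only [mul_nonneg hNpos.le hinner]
        have hquad : 0 ≤ M * (r₂ / K₂) - N * a := by
          have hNA := mul_nonneg hNpos.le hA.le
          rw [hA'def] at hNA
          rw [hMN]
          have hNAe : N * (QR * r₂ / K₂ - a) = QR * N * (r₂ / K₂) - N * a := by ring
          linarith only [hNA, hNAe]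
        have step1 : N * (R - a * x₂ t) * (θ + x₂ t) ≤
            N * hpg1 r₁ K₁ a h x₁ x₂ t * (θ + x₂ t) := by
          apply mul_le_mul_of_nonneg_right _ hp.le
          exact mul_le_mul_of_nonneg_left hg₁lb hNpos.le
        have step2 : M * x₂ t * hpg2 r₂ K₂ a h e d x₁ x₂ t ≤
            M * x₂ t * (e * a * δ + (r₂ - d) - r₂ * x₂ t / K₂) :=
          mul_le_mul_of_nonneg_left hg₂ub (by positivity)
        have hsum : 0 ≤ N * (R - a * x₂ t) * (θ + x₂ t) -
            M * x₂ t * (e * a * δ + (r₂ - d) - r₂ * x₂ t / K₂) := by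
          have expand : N * (R - a * x₂ t) * (θ + x₂ t) -
              M * x₂ t * (e * a * δ + (r₂ - d) - r₂ * x₂ t / K₂) =
              N * R * θ + (N * R - N * (a * θ) - M * (e * a * δ + (r₂ - d))) * x₂ t +
              (M * (r₂ / K₂) - N * a) * (x₂ t * x₂ t) := by ring
          rw [expand]
          have t1 : 0 ≤ N * R * θ := by positivity
          have t2 : 0 ≤ (N * R - N * (a * θ) - M * (e * a * δ + (r₂ - d))) * x₂ t :=
            mul_nonneg hmid hv
          have t3 : 0 ≤ (M * (r₂ / K₂) - N * a) * (x₂ t * x₂ t) :=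
            mul_nonneg hquad (mul_nonneg hv hv)
          linarith only [t1, t2, t3]
        linarith only [step1, step2, hsum]
      · -- large x₁ region: x₂ must be large
        push_neg at huδ
        have hWc : W t ≤ c := le_trans hWle hc₀c
        have h2 : x₁ t ^ n / (θ + x₂ t) ^ m ≤ δ ^ n / (θ + Z) ^ m := by
          have := hWc
          rw [hWdef, hcdef] at this
          simpa using this
        have hvZ : Z ≤ x₂ t := by
          have h1 : δ ^ n ≤ x₁ t ^ n := pow_le_pow_left₀ hδ.le huδ.le n
          have h2' : x₁ t ^ n * (θ + Z) ^ m ≤ δ ^ n * (θ + x₂ t) ^ m := by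
            rw [div_le_div_iff₀ (by positivity) (by positivity)] at h2
            exact h2
          have h3 : δ ^ n * (θ + Z) ^ m ≤ δ ^ n * (θ + x₂ t) ^ m :=
            le_trans (mul_le_mul_of_nonneg_right h1 (pow_pos hθZ m).le) h2'
          have h4 : (θ + Z) ^ m ≤ (θ + x₂ t) ^ m :=
            le_of_mul_le_mul_left h3 (pow_pos hδ n)
          have h5 : θ + Z ≤ θ + x₂ t :=
            le_of_pow_le_pow_left₀ (by omega) hp.le h4
          linarith only [h5]
        have hg₁lb : -G - a * x₂ t ≤ hpg1 r₁ K₁ a h x₁ x₂ t := by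
          unfold hpg1
          have hdiv : x₁ t / K₁ ≤ X / K₁ := by gcongr
          have h1 : r₁ - G ≤ r₁ * (1 - x₁ t / K₁) := by
            rw [hGdef]
            have h1a := mul_le_mul_of_nonneg_left
              (show 1 - X / K₁ ≤ 1 - x₁ t / K₁ by linarith only [hdiv]) hr₁.le
            have h1b : r₁ * (1 - X / K₁) = r₁ - r₁ * X / K₁ := by ring
            linarith only [h1a, h1b]
          have h2 : a * x₂ t / (1 + h * a * x₁ t) ≤ a * x₂ t := by
            apply div_le_self (by positivity)
            linarith only [mul_nonneg (mul_nonneg hh.le ha.le) hu.le]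
          linarith only [h1, h2, hr₁]
        have hg₂ub : hpg2 r₂ K₂ a h e d x₁ x₂ t ≤ γ₂ - r₂ * x₂ t / K₂ := by
          unfold hpg2
          have h1 : e * a * x₁ t / (1 + h * a * x₁ t) ≤ e / h := by
            rw [div_le_div_iff₀ hdenpos hh]
            have h9 := mul_nonneg (mul_nonneg (mul_nonneg he.le hh.le) ha.le) hu.le
            linarith only [h9, he]
          have h2 : r₂ * (1 - x₂ t / K₂) = r₂ - r₂ * x₂ t / K₂ := by ring
          rw [hγ₂def]
          linarith only [h1, h2, hd]
        have step1 : N * (-G - a * x₂ t) * (θ + x₂ t) ≤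
            N * hpg1 r₁ K₁ a h x₁ x₂ t * (θ + x₂ t) := by
          apply mul_le_mul_of_nonneg_right _ hp.le
          exact mul_le_mul_of_nonneg_left hg₁lb hNpos.le
        have step2 : M * x₂ t * hpg2 r₂ K₂ a h e d x₁ x₂ t ≤
            M * x₂ t * (γ₂ - r₂ * x₂ t / K₂) :=
          mul_le_mul_of_nonneg_left hg₂ub (by positivity)
        have hGθ : 0 ≤ G * θ := mul_nonneg hG.le hθ.le
        have hposquad : 0 ≤ A' * (x₂ t * x₂ t) - B₁ * x₂ t - G * θ := by
          have hq1 : A' * Z - B₁ ≤ A' * x₂ t - B₁ := by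
            linarith only [mul_le_mul_of_nonneg_left hvZ hA.le]
          have hq2 : G * θ + 1 ≤ A' * Z - B₁ := by rw [hZkey]; linarith only [hA]
          have hq3 : Z * (A' * Z - B₁) ≤ x₂ t * (A' * x₂ t - B₁) :=
            mul_le_mul hvZ hq1 (by linarith only [hq2, hGθ]) (by linarith only [hv])
          have hq4 : G * θ + 1 ≤ Z * (A' * Z - B₁) := by
            have h0 : 0 ≤ A' * Z - B₁ := by linarith only [hq2, hGθ]
            have h9 := mul_le_mul_of_nonneg_right hZ1 h0
            linarith only [h9, hq2]
          linarith only [hq3, hq4]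
        have expand : N * (-G - a * x₂ t) * (θ + x₂ t) - M * x₂ t * (γ₂ - r₂ * x₂ t / K₂) =
            N * (A' * (x₂ t * x₂ t) - B₁ * x₂ t - G * θ) := by
          rw [hMN, hA'def, hB₁def]; ring
        have hsum : 0 ≤ N * (-G - a * x₂ t) * (θ + x₂ t) -
            M * x₂ t * (γ₂ - r₂ * x₂ t / K₂) := by
          rw [expand]
          exact mul_nonneg hNpos.le hposquad
        linarith only [step1, step2, hsum]
    have hWdeq : Wd t = (x₁ t ^ n₀ * (θ + x₂ t) ^ m₀ *
        (x₁ t * (N * hpg1 r₁ K₁ a h x₁ x₂ t * (θ + x₂ t) -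
          M * x₂ t * hpg2 r₂ K₂ a h e d x₁ x₂ t))) / (((θ + x₂ t) ^ m) ^ 2) := by
      rw [hWddef]
      simp only [hndef, hmdef, hMdef, hNdef, Nat.add_sub_cancel]
      push_cast
      ring
    rw [hWdeq]
    apply div_nonneg _ (sq_nonneg _)
    apply mul_nonneg (mul_nonneg (pow_nonneg hu.le _) (pow_nonneg hp.le _))
    exact mul_nonneg hu.le hE
  -- Step 8: apply barrier
  have hWlow : ∀ t, (0:ℝ) ≤ t → c₀ ≤ W t :=
    lower_barrier hWder (by rw [hc₀def]; exact min_le_right _ _) hkey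
  -- Step 9: pointwise lower bound
  set κ : ℝ := c₀ * θ ^ m with hκdef
  have hκ : 0 < κ := by rw [hκdef]; positivity
  set ρ : ℝ := min 1 κ with hρdef
  have hρ : 0 < ρ := by rw [hρdef]; exact lt_min one_pos hκ
  have hlb : ∀ t, (0:ℝ) ≤ t → ρ ≤ x₁ t := by
    intro t ht
    have hu : 0 < x₁ t := hpos₁ t ht
    have hv : 0 ≤ x₂ t := hnn₂ t ht
    have hp : 0 < θ + x₂ t := by linarith only [hθ, hv]
    have h1 : c₀ ≤ x₁ t ^ n / (θ + x₂ t) ^ m := by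
      have := hWlow t ht
      rw [hWdef] at this
      simpa using this
    have h2 : c₀ * (θ + x₂ t) ^ m ≤ x₁ t ^ n := by
      rw [le_div_iff₀ (by positivity)] at h1; linarith only [h1]
    have h3 : θ ^ m ≤ (θ + x₂ t) ^ m := pow_le_pow_left₀ hθ.le (by linarith) m
    have h4 : κ ≤ x₁ t ^ n := by
      rw [hκdef]
      calc c₀ * θ ^ m ≤ c₀ * (θ + x₂ t) ^ m := mul_le_mul_of_nonneg_left h3 hc₀.le
        _ ≤ x₁ t ^ n := h2
    rcases le_or_gt (x₁ t) 1 with hle | hgt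
    · have h5 : x₁ t ^ n ≤ x₁ t := pow_le_of_le_one hu.le hle (by omega)
      have h6 : κ ≤ x₁ t := le_trans h4 h5
      rw [hρdef]
      exact le_trans (min_le_right _ _) h6
    · rw [hρdef]
      exact le_trans (min_le_left _ _) hgt.le
  -- Step 10: liminf
  have hev : ∀ᶠ t in atTop, ρ ≤ x₁ t := eventually_atTop.2 ⟨0, fun t ht => hlb t ht⟩
  have hevX : ∀ᶠ t in atTop, x₁ t ≤ X := eventually_atTop.2 ⟨0, fun t ht => hX t ht⟩
  have hcb : IsCoboundedUnder (· ≥ ·) atTop x₁ :=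
    isCoboundedUnder_ge_of_eventually_le atTop hevX
  exact lt_of_lt_of_le hρ (le_liminf_of_le hcb hev)
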